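/- Let B ∈ ℝ^{m×n} be an arbitrary matrix and Ω ∈ ℝ^{n×ℓ} a matrix. Let Q be a matrix whose columns form an orthonormal basis for range(BΩ), so that QQᵀ is the orthogonal projection onto range(BΩ). Set A = BᵀB and let Â = AΩ(ΩᵀAΩ)†ΩᵀA be the corresponding Nyström approximation of A. Then for every s ≥ 1, ‖B − QQᵀB‖_(2s)² = ‖A − Â‖_(s). -/

import Mathlib

open MeasureTheory ProbabilityTheory Matrix Filter Finset

noncomputable section

/-- The singular values of a real rectangular matrix (with multiplicity, padded with zeros),
defined as the square roots of the eigenvalues of `Aᴴ * A`. -/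
def singVals {m n : ℕ} (A : Matrix (Fin m) (Fin n) ℝ) (i : Fin n) : ℝ :=
  Real.sqrt (((show (Aᵀ * A).IsHermitian by
    simpa [Matrix.conjTranspose_eq_transpose_of_trivial] using
      Matrix.isHermitian_conjTranspose_mul_self A).eigenvalues i))

/-- Spectral norm (largest singular value). -/
def specNorm {m n : ℕ} (A : Matrix (Fin m) (Fin n) ℝ) : ℝ := ⨆ i, singVals A i

/-- Frobenius norm. -/
def frobNorm {m n : ℕ} (A : Matrix (Fin m) (Fin n) ℝ) : ℝ :=
  Real.sqrt (∑ i, ∑ j, (A i j) ^ 2)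

/-- Nuclear (trace) norm. -/
def nuclearNorm {m n : ℕ} (A : Matrix (Fin m) (Fin n) ℝ) : ℝ := ∑ i, singVals A i

/-- Schatten `s`-norm. -/
def schattenNorm {m n : ℕ} (s : ℝ) (A : Matrix (Fin m) (Fin n) ℝ) : ℝ :=
  (∑ i, singVals A i ^ s) ^ s⁻¹

/-- Moore–Penrose pseudoinverse, via the limit formula `A† = lim_{ε→0⁺} (AᵀA + εI)⁻¹Aᵀ`. -/
def pinv {m n : ℕ} (A : Matrix (Fin m) (Fin n) ℝ) : Matrix (Fin n) (Fin m) ℝ :=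
  limUnder (nhdsWithin (0 : ℝ) (Set.Ioi 0))
    (fun ε : ℝ => (Aᵀ * A + ε • (1 : Matrix (Fin n) (Fin n) ℝ))⁻¹ * Aᵀ)

/-- The centered multivariate Gaussian measure `N(0, K)` on `Fin n → ℝ`, obtained by pushing
forward a standard Gaussian vector under multiplication with `K^{1/2}`. -/
def mvGaussian {n : ℕ} (K : Matrix (Fin n) (Fin n) ℝ) (hK : K.PosSemidef) :
    Measure (Fin n → ℝ) :=
  (Measure.pi fun _ : Fin n => gaussianReal 0 1).map fun x =>
    (hK.1.eigenvectorUnitary.1 * Matrix.diagonal (Real.sqrt ∘ hK.1.eigenvalues) *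
      (star hK.1.eigenvectorUnitary : Matrix (Fin n) (Fin n) ℝ)).mulVec x

/-- The Nyström approximation `A Ω (Ωᵀ A Ω)† Ωᵀ A`. -/
def nystromApprox {n l : ℕ} (A : Matrix (Fin n) (Fin n) ℝ) (W : Matrix (Fin n) (Fin l) ℝ) :
    Matrix (Fin n) (Fin n) ℝ :=
  A * W * pinv (Wᵀ * A * W) * Wᵀ * A

section Setup

variable {k m : ℕ}

/-- First `k` columns of `U`. -/
def Umat1 (U : Matrix (Fin (k + m)) (Fin (k + m)) ℝ) : Matrix (Fin (k + m)) (Fin k) ℝ :=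
  U.submatrix id (Fin.castAdd m)

/-- Last `m` columns of `U`. -/
def Umat2 (U : Matrix (Fin (k + m)) (Fin (k + m)) ℝ) : Matrix (Fin (k + m)) (Fin m) ℝ :=
  U.submatrix id (Fin.natAdd k)

/-- `Σ₂ = diag(σ_{k+1}, …, σ_n)`. -/
def Sig2 (σ : Fin (k + m) → ℝ) : Matrix (Fin m) (Fin m) ℝ :=
  Matrix.diagonal fun i => σ (Fin.natAdd k i)

/-- `Σ₂^{1/2}`. -/
def Sig2half (σ : Fin (k + m) → ℝ) : Matrix (Fin m) (Fin m) ℝ :=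
  Matrix.diagonal fun i => Real.sqrt (σ (Fin.natAdd k i))

/-- `K̃₁₁ = U₁ᵀ K U₁`. -/
def Kt11 (U K : Matrix (Fin (k + m)) (Fin (k + m)) ℝ) : Matrix (Fin k) (Fin k) ℝ :=
  (Umat1 U)ᵀ * K * Umat1 U

/-- `K̃₂₁ = U₂ᵀ K U₁`. -/
def Kt21 (U K : Matrix (Fin (k + m)) (Fin (k + m)) ℝ) : Matrix (Fin m) (Fin k) ℝ :=
  (Umat2 U)ᵀ * K * Umat1 U

/-- `K̃₂₂ = U₂ᵀ K U₂`. -/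
def Kt22 (U K : Matrix (Fin (k + m)) (Fin (k + m)) ℝ) : Matrix (Fin m) (Fin m) ℝ :=
  (Umat2 U)ᵀ * K * Umat2 U

/-- Schur complement `K̃₂₂.₁ = K̃₂₂ − K̃₂₁ K̃₁₁⁻¹ K̃₂₁ᵀ`. -/
def Kt221 (U K : Matrix (Fin (k + m)) (Fin (k + m)) ℝ) : Matrix (Fin m) (Fin m) ℝ :=
  Kt22 U K - Kt21 U K * (Kt11 U K)⁻¹ * (Kt21 U K)ᵀ

/-- `β_k^{(ξ)} = ‖Σ₂^{1/2} K̃₂₂.₁ Σ₂^{1/2}‖_ξ ‖K̃₁₁⁻¹‖₂ / ‖Σ₂‖_ξ`. -/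
def betaNorm (σ : Fin (k + m) → ℝ) (U K : Matrix (Fin (k + m)) (Fin (k + m)) ℝ)
    (ξ : Matrix (Fin m) (Fin m) ℝ → ℝ) : ℝ :=
  ξ (Sig2half σ * Kt221 U K * Sig2half σ) * specNorm (Kt11 U K)⁻¹ / ξ (Sig2 σ)

/-- `δ_k^{(ξ)} = ‖Σ₂^{1/2} K̃₂₁ K̃₁₁⁻² K̃₂₁ᵀ Σ₂^{1/2}‖_ξ / ‖Σ₂‖_ξ`. -/
def deltaNorm (σ : Fin (k + m) → ℝ) (U K : Matrix (Fin (k + m)) (Fin (k + m)) ℝ)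
    (ξ : Matrix (Fin m) (Fin m) ℝ → ℝ) : ℝ :=
  ξ (Sig2half σ * (Kt21 U K * ((Kt11 U K)⁻¹ * (Kt11 U K)⁻¹) * (Kt21 U K)ᵀ) * Sig2half σ)
    / ξ (Sig2 σ)

end Setup

lemma aux_isHermitian_transpose_mul_self {m n : ℕ} (A : Matrix (Fin m) (Fin n) ℝ) :
    (Aᵀ * A).IsHermitian := by
  simpa [Matrix.conjTranspose_eq_transpose_of_trivial] using
    Matrix.isHermitian_conjTranspose_mul_self A

section AuxLemmas

open Polynomial

/-- Characteristic polynomial is invariant under conjugation by an invertible matrix. -/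
lemma aux_charpoly_conj {n : ℕ} {U V : Matrix (Fin n) (Fin n) ℝ}
    (D : Matrix (Fin n) (Fin n) ℝ) (h1 : U * V = 1) :
    (U * D * V).charpoly = D.charpoly := by
  have key : charmatrix (U * D * V)
      = (C : ℝ →+* ℝ[X]).mapMatrix U * charmatrix D * (C : ℝ →+* ℝ[X]).mapMatrix V := by
    unfold charmatrix
    rw [Matrix.mul_sub, Matrix.sub_mul, ← _root_.map_mul, ← _root_.map_mul]
    congr 1
    · have hc : Commute (Matrix.scalar (Fin n) (X : ℝ[X]))
          ((C : ℝ →+* ℝ[X]).mapMatrix U) :=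
        (Matrix.scalar_commute (X : ℝ[X]) (fun r => Commute.all _ _) _)
      rw [← hc.eq, mul_assoc, ← _root_.map_mul, h1, _root_.map_one, mul_one]
  unfold Matrix.charpoly
  have hdet : ((C : ℝ →+* ℝ[X]).mapMatrix U).det * ((C : ℝ →+* ℝ[X]).mapMatrix V).det = 1 := by
    rw [← Matrix.det_mul, ← _root_.map_mul, h1, _root_.map_one, Matrix.det_one]
  rw [key, Matrix.det_mul, Matrix.det_mul]
  linear_combination (D.charmatrix.det) * hdet

lemma aux_charpoly_diagonal {n : ℕ} (d : Fin n → ℝ) :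
    (Matrix.diagonal d).charpoly
      = ((Finset.univ.val.map d).map (fun a => X - C a)).prod := by
  have hcm : charmatrix (Matrix.diagonal d)
      = Matrix.diagonal (fun i => (X : ℝ[X]) - C (d i)) := by
    ext i j
    by_cases h : i = j
    · subst h; simp
    · simp [Matrix.charmatrix_apply_ne _ _ _ h, Matrix.diagonal_apply_ne _ h]
  rw [Matrix.charpoly, hcm, Matrix.det_diagonal, Multiset.map_map]
  rfl

/-- The roots (with multiplicity) of the characteristic polynomial of a real symmetric
matrix are its eigenvalues. -/
lemma aux_roots_charpoly {n : ℕ} {N : Matrix (Fin n) (Fin n) ℝ} (hN : N.IsHermitian) :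
    N.charpoly.roots = Finset.univ.val.map hN.eigenvalues := by
  have h1 : (hN.eigenvectorUnitary : Matrix (Fin n) (Fin n) ℝ)
      * star (hN.eigenvectorUnitary : Matrix (Fin n) (Fin n) ℝ) = 1 :=
    (Matrix.mem_unitaryGroup_iff).mp hN.eigenvectorUnitary.2
  have hst := hN.spectral_theorem
  have hof : (RCLike.ofReal ∘ hN.eigenvalues : Fin n → ℝ) = hN.eigenvalues := rfl
  rw [hof, Unitary.conjStarAlgAut_apply] at hst
  conv_lhs => rw [hst]
  rw [aux_charpoly_conj _ h1, aux_charpoly_diagonal, roots_multiset_prod_X_sub_C]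

/-- Summing a function over the eigenvalues of `Nᴴ * N` for real symmetric `N` equals
summing it over the squares of the eigenvalues of `N`. -/
lemma aux_sum_eigen_sq {n : ℕ} {N : Matrix (Fin n) (Fin n) ℝ} (hN : N.IsHermitian)
    (f : ℝ → ℝ) :
    ∑ i, f ((aux_isHermitian_transpose_mul_self N).eigenvalues i)
      = ∑ i, f (hN.eigenvalues i ^ 2) := by
  have h1 : (hN.eigenvectorUnitary : Matrix (Fin n) (Fin n) ℝ)
      * star (hN.eigenvectorUnitary : Matrix (Fin n) (Fin n) ℝ) = 1 :=
    (Matrix.mem_unitaryGroup_iff).mp hN.eigenvectorUnitary.2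
  have h2 : star (hN.eigenvectorUnitary : Matrix (Fin n) (Fin n) ℝ)
      * (hN.eigenvectorUnitary : Matrix (Fin n) (Fin n) ℝ) = 1 :=
    mul_eq_one_comm.mp h1
  have hst := hN.spectral_theorem
  have hof : (RCLike.ofReal ∘ hN.eigenvalues : Fin n → ℝ) = hN.eigenvalues := rfl
  rw [hof, Unitary.conjStarAlgAut_apply] at hst
  -- Nᴴ * N = U * diagonal (eigenvalues ^ 2) * star U
  have hsq : Nᴴ * N = (hN.eigenvectorUnitary : Matrix (Fin n) (Fin n) ℝ)
      * Matrix.diagonal (fun i => hN.eigenvalues i ^ 2)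
      * star (hN.eigenvectorUnitary : Matrix (Fin n) (Fin n) ℝ) := by
    rw [hN.eq]
    conv_lhs => rw [hst]
    have hd : (fun i => hN.eigenvalues i ^ 2)
        = fun i => hN.eigenvalues i * hN.eigenvalues i := funext fun i => sq (hN.eigenvalues i)
    rw [hd, ← Matrix.diagonal_mul_diagonal]
    simp only [Matrix.mul_assoc]
    rw [← Matrix.mul_assoc (star _) _, h2, Matrix.one_mul]
  have hroots : (Finset.univ.val.map
        (aux_isHermitian_transpose_mul_self N).eigenvalues)
      = Finset.univ.val.map (fun i => hN.eigenvalues i ^ 2) := by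
    rw [← aux_roots_charpoly (aux_isHermitian_transpose_mul_self N)]
    rw [← Matrix.conjTranspose_eq_transpose_of_trivial, hsq, aux_charpoly_conj _ h1, aux_charpoly_diagonal,
      roots_multiset_prod_X_sub_C]
  calc ∑ i, f ((aux_isHermitian_transpose_mul_self N).eigenvalues i)
      = ((Finset.univ.val.map
          (aux_isHermitian_transpose_mul_self N).eigenvalues).map f).sum := by
        rw [Multiset.map_map]; rfl
    _ = ((Finset.univ.val.map (fun i => hN.eigenvalues i ^ 2)).map f).sum := by
        rw [hroots]
    _ = ∑ i, f (hN.eigenvalues i ^ 2) := by rw [Multiset.map_map]; rfl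

end AuxLemmas

section AuxLemmas2

lemma aux_conjT_eq_transpose {m n : ℕ} (E : Matrix (Fin m) (Fin n) ℝ) : Eᴴ = Eᵀ := rfl

lemma aux_schatten {m n : ℕ} (E : Matrix (Fin m) (Fin n) ℝ) {s : ℝ} (hs : 1 ≤ s) :
    schattenNorm (2 * s) E ^ 2 = schattenNorm s (Eᵀ * E) := by
  have hs0 : (0:ℝ) < s := lt_of_lt_of_le one_pos hs
  have hMh : (Eᵀ * E).IsHermitian := aux_isHermitian_transpose_mul_self E
  set μ : Fin n → ℝ := (aux_isHermitian_transpose_mul_self E).eigenvalues with hμ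
  have hμ0 : ∀ i, 0 ≤ μ i := fun i =>
    Matrix.eigenvalues_conjTranspose_mul_self_nonneg E i
  have hμeq : hMh.eigenvalues = μ := rfl
  have key1 : ∀ i, singVals E i ^ (2 * s) = μ i ^ s := by
    intro i
    rw [singVals, Real.sqrt_eq_rpow, ← Real.rpow_mul (hμ0 i),
      show (1/2) * (2*s) = s by ring]
  have key2 : ∑ i, singVals (Eᵀ * E) i ^ s = ∑ i, μ i ^ s := by
    have := aux_sum_eigen_sq hMh (fun x => Real.sqrt x ^ s)
    simp only [singVals]
    rw [this]
    refine Finset.sum_congr rfl fun i _ => ?_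
    rw [hμeq, Real.sqrt_sq (hμ0 i)]
  have hX : (0:ℝ) ≤ ∑ i, μ i ^ s :=
    Finset.sum_nonneg fun i _ => Real.rpow_nonneg (hμ0 i) s
  rw [schattenNorm, schattenNorm, key2]
  have hsum : ∑ i, singVals E i ^ (2*s) = ∑ i, μ i ^ s :=
    Finset.sum_congr rfl fun i _ => key1 i
  rw [hsum, ← Real.rpow_natCast ((∑ i, μ i ^ s) ^ (2*s)⁻¹) 2, ← Real.rpow_mul hX,
    show ((2*s)⁻¹ * ((2:ℕ):ℝ)) = s⁻¹ by push_cast; rw [mul_inv]; ring]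

lemma aux_exists_factor {m n r : ℕ} (N : Matrix (Fin m) (Fin r) ℝ)
    (M : Matrix (Fin m) (Fin n) ℝ)
    (h : LinearMap.range (Matrix.mulVecLin M) ≤ LinearMap.range (Matrix.mulVecLin N)) :
    ∃ X : Matrix (Fin r) (Fin n) ℝ, N * X = M := by
  have hmem : ∀ j, ∃ v : Fin r → ℝ, N *ᵥ v = M *ᵥ Pi.single j 1 := by
    intro j
    have : M *ᵥ Pi.single j 1 ∈ LinearMap.range (Matrix.mulVecLin M) :=
      ⟨Pi.single j 1, rfl⟩
    obtain ⟨v, hv⟩ := h this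
    exact ⟨v, hv⟩
  choose v hv using hmem
  refine ⟨Matrix.of fun i j => v j i, ?_⟩
  ext i j
  have h1 : (N * Matrix.of fun i j => v j i) i j = (N *ᵥ v j) i := by
    simp [Matrix.mul_apply, Matrix.mulVec, dotProduct]
  rw [h1, hv j, Matrix.mulVec_single]
  simp

lemma aux_psd_add_smul {k : ℕ} {N : Matrix (Fin k) (Fin k) ℝ} (hN : N.PosSemidef)
    {ε : ℝ} (hε : 0 < ε) : (N + ε • 1).PosDef := by
  rw [Matrix.posDef_iff_dotProduct_mulVec]
  constructor
  · have h1 : ((1 : Matrix (Fin k) (Fin k) ℝ)).IsHermitian := Matrix.isHermitian_one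
    have h2 : (ε • (1 : Matrix (Fin k) (Fin k) ℝ)).IsHermitian := by
      unfold Matrix.IsHermitian
      rw [Matrix.conjTranspose_smul, h1.eq, star_trivial]
    exact hN.1.add h2
  · intro x hx
    have h1 : (N + ε • (1 : Matrix (Fin k) (Fin k) ℝ)) *ᵥ x = N *ᵥ x + ε • x := by
      rw [Matrix.add_mulVec, Matrix.smul_mulVec, Matrix.one_mulVec]
    rw [h1, dotProduct_add]
    have h2 : (0:ℝ) < dotProduct (star x) (ε • x) := by
      rw [dotProduct_smul]
      have hxx : (0:ℝ) < dotProduct (star x) x := by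
        have hne : dotProduct (star x) x ≠ 0 := by
          simpa using (dotProduct_star_self_eq_zero (v := x)).not.mpr hx
        have hnn : (0:ℝ) ≤ dotProduct (star x) x := by
          simpa [dotProduct, star] using
            Finset.sum_nonneg (fun i _ => mul_self_nonneg (x i))
        exact lt_of_le_of_ne hnn (Ne.symm hne)
      exact smul_pos hε hxx
    have h3 := (Matrix.posSemidef_iff_dotProduct_mulVec.mp hN).2 x
    linarith

end AuxLemmas2

section AuxLemmas3

lemma aux_dot_self_pos {k : ℕ} {x : Fin k → ℝ} (hx : x ≠ 0) :
    0 < dotProduct (star x) x := by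
  have hne : dotProduct (star x) x ≠ 0 := by
    simpa using (dotProduct_star_self_eq_zero (v := x)).not.mpr hx
  have hnn : (0:ℝ) ≤ dotProduct (star x) x := by
    simpa [dotProduct, star] using
      Finset.sum_nonneg (fun i (_ : i ∈ Finset.univ) => mul_self_nonneg (x i))
  exact lt_of_le_of_ne hnn (Ne.symm hne)

lemma aux_sandwich {a b : ℕ} (P : Matrix (Fin a) (Fin a) ℝ)
    (S : Matrix (Fin b) (Fin b) ℝ) (T : Matrix (Fin a) (Fin b) ℝ)
    (hP : IsUnit P.det) (hS : IsUnit S.det)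
    (key : P * T = T * S) : T * S⁻¹ = P⁻¹ * T :=
  calc T * S⁻¹
      = P⁻¹ * (P * (T * S⁻¹)) := by
        rw [← Matrix.mul_assoc P⁻¹ P, Matrix.nonsing_inv_mul _ hP, Matrix.one_mul]
    _ = P⁻¹ * ((P * T) * S⁻¹) := by rw [Matrix.mul_assoc P T]
    _ = P⁻¹ * ((T * S) * S⁻¹) := by rw [key]
    _ = P⁻¹ * T := by rw [Matrix.mul_assoc T S, Matrix.mul_nonsing_inv _ hS, Matrix.mul_one]

lemma aux_pinv_eq {r l : ℕ} (R : Matrix (Fin r) (Fin l) ℝ)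
    (hG : IsUnit (R * Rᵀ)) :
    pinv (Rᵀ * R) = Rᵀ * (R * Rᵀ * (R * Rᵀ))⁻¹ * R := by
  have hMT : (Rᵀ * R)ᵀ = Rᵀ * R := by
    rw [Matrix.transpose_mul, Matrix.transpose_transpose]
  have hGT : (R * Rᵀ)ᵀ = R * Rᵀ := by
    rw [Matrix.transpose_mul, Matrix.transpose_transpose]
  have hGdetu : IsUnit (R * Rᵀ).det := (Matrix.isUnit_iff_isUnit_det _).mp hG
  have hHu : IsUnit (R * Rᵀ * (R * Rᵀ)).det := by
    rw [Matrix.det_mul]; exact hGdetu.mul hGdetu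
  have hMM : ((Rᵀ * R) * (Rᵀ * R)).PosSemidef := by
    have h := Matrix.posSemidef_conjTranspose_mul_self (Rᵀ * R)
    rwa [aux_conjT_eq_transpose, hMT] at h
  have hGG : ((R * Rᵀ) * (R * Rᵀ)).PosSemidef := by
    have h := Matrix.posSemidef_conjTranspose_mul_self (R * Rᵀ)
    rwa [aux_conjT_eq_transpose, hGT] at h
  have heq : ∀ ε ∈ Set.Ioi (0:ℝ),
      ((Rᵀ * R)ᵀ * (Rᵀ * R) + ε • 1)⁻¹ * (Rᵀ * R)ᵀ
        = Rᵀ * ((R * Rᵀ) * (R * Rᵀ) + ε • 1)⁻¹ * R := by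
    intro ε hε
    have hP : IsUnit ((Rᵀ * R) * (Rᵀ * R) + ε • 1).det :=
      (Matrix.isUnit_iff_isUnit_det _).mp (aux_psd_add_smul hMM hε).isUnit
    have hS : IsUnit ((R * Rᵀ) * (R * Rᵀ) + ε • 1).det :=
      (Matrix.isUnit_iff_isUnit_det _).mp (aux_psd_add_smul hGG hε).isUnit
    have key : ((Rᵀ * R) * (Rᵀ * R) + ε • 1) * Rᵀ
        = Rᵀ * ((R * Rᵀ) * (R * Rᵀ) + ε • 1) := by
      rw [Matrix.add_mul, Matrix.mul_add, Matrix.smul_mul, Matrix.one_mul,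
        Matrix.mul_smul, Matrix.mul_one]
      congr 1
      simp only [Matrix.mul_assoc]
    have h2 := aux_sandwich _ _ _ hP hS key
    rw [hMT, ← Matrix.mul_assoc, ← h2]
  have h1 : Continuous (fun ε : ℝ =>
      (R * Rᵀ) * (R * Rᵀ) + ε • (1 : Matrix (Fin r) (Fin r) ℝ)) := by
    continuity
  have h2 : ContinuousAt Inv.inv
      ((R * Rᵀ) * (R * Rᵀ) + (0:ℝ) • (1 : Matrix (Fin r) (Fin r) ℝ)) := by
    rw [zero_smul, add_zero]
    exact continuousAt_matrix_inv _ (by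
      have := NormedRing.inverse_continuousAt hHu.unit
      simpa using this)
  have h3 : Filter.Tendsto
      (fun ε : ℝ => ((R * Rᵀ) * (R * Rᵀ) + ε • (1 : Matrix (Fin r) (Fin r) ℝ))⁻¹)
      (nhds 0)
      (nhds ((R * Rᵀ) * (R * Rᵀ) + (0:ℝ) • (1 : Matrix (Fin r) (Fin r) ℝ))⁻¹) :=
    Filter.Tendsto.comp h2 h1.continuousAt
  have hmulcont : Continuous (fun X : Matrix (Fin r) (Fin r) ℝ => Rᵀ * X * R) :=
    (continuous_const.matrix_mul continuous_id).matrix_mul continuous_const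
  have h4 := (hmulcont.tendsto _).comp h3
  have hcont : Filter.Tendsto
      (fun ε : ℝ => Rᵀ * ((R * Rᵀ) * (R * Rᵀ) + ε • 1)⁻¹ * R) (nhds 0)
      (nhds (Rᵀ * ((R * Rᵀ) * (R * Rᵀ))⁻¹ * R)) := by
    simpa [Function.comp_def] using h4
  have htend : Filter.Tendsto
      (fun ε : ℝ => ((Rᵀ * R)ᵀ * (Rᵀ * R) + ε • 1)⁻¹ * (Rᵀ * R)ᵀ)
      (nhdsWithin 0 (Set.Ioi 0)) (nhds (Rᵀ * ((R * Rᵀ) * (R * Rᵀ))⁻¹ * R)) := by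
    refine Filter.Tendsto.congr' ?_ (hcont.mono_left nhdsWithin_le_nhds)
    filter_upwards [self_mem_nhdsWithin] with ε hε
    exact (heq ε hε).symm
  rw [pinv]
  exact htend.limUnder_eq

end AuxLemmas3

section AuxLemmas4

lemma aux_ginv {a : ℕ} (G : Matrix (Fin a) (Fin a) ℝ) (h : IsUnit G.det) :
    G * (G * G)⁻¹ * G = 1 := by
  rw [Matrix.mul_inv_rev, ← Matrix.mul_assoc, Matrix.mul_nonsing_inv _ h,
    Matrix.one_mul, Matrix.nonsing_inv_mul _ h]

lemma aux_proj {m r l : ℕ} (Q : Matrix (Fin m) (Fin r) ℝ) (R : Matrix (Fin r) (Fin l) ℝ)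
    (hQ : Qᵀ * Q = 1) (hGu : IsUnit (R * Rᵀ)) :
    (Q * R) * (Rᵀ * ((R * Rᵀ) * (R * Rᵀ))⁻¹ * R) * (Q * R)ᵀ = Q * Qᵀ := by
  have hdet := (Matrix.isUnit_iff_isUnit_det _).mp hGu
  have hmid : R * Rᵀ * ((R * Rᵀ) * (R * Rᵀ))⁻¹ * (R * Rᵀ) = 1 := aux_ginv _ hdet
  have e1 : (Q * R) * (Rᵀ * ((R * Rᵀ) * (R * Rᵀ))⁻¹ * R)
      = Q * (R * Rᵀ * ((R * Rᵀ) * (R * Rᵀ))⁻¹ * R) := by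
    simp only [Matrix.mul_assoc]
  have e2 : R * Rᵀ * ((R * Rᵀ) * (R * Rᵀ))⁻¹ * R * (Rᵀ * Qᵀ)
      = (R * Rᵀ * ((R * Rᵀ) * (R * Rᵀ))⁻¹ * (R * Rᵀ)) * Qᵀ := by
    simp only [Matrix.mul_assoc]
  rw [Matrix.transpose_mul, e1, Matrix.mul_assoc Q, e2, hmid, Matrix.one_mul]

lemma aux_proj' {m r l : ℕ} (Q : Matrix (Fin m) (Fin r) ℝ) (C : Matrix (Fin m) (Fin l) ℝ)
    (hQ : Qᵀ * Q = 1) (hQR : Q * (Qᵀ * C) = C)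
    (hGu : IsUnit ((Qᵀ * C) * (Qᵀ * C)ᵀ)) :
    C * ((Qᵀ * C)ᵀ * (((Qᵀ * C) * (Qᵀ * C)ᵀ) * ((Qᵀ * C) * (Qᵀ * C)ᵀ))⁻¹ * (Qᵀ * C)) * Cᵀ
      = Q * Qᵀ := by
  have h := aux_proj Q (Qᵀ * C) hQ hGu
  rwa [hQR] at h

end AuxLemmas4

/-- the randomized SVD error equals the Nyström error of `A = BᵀB`. -/
theorem rsvd_eq_nystrom
    {m n l r : ℕ}
    (B : Matrix (Fin m) (Fin n) ℝ) (Om : Matrix (Fin n) (Fin l) ℝ)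
    (Q : Matrix (Fin m) (Fin r) ℝ) (hQ : Qᵀ * Q = 1)
    (hrange : LinearMap.range (Matrix.mulVecLin Q)
      = LinearMap.range (Matrix.mulVecLin (B * Om)))
    (s : ℝ) (hs : 1 ≤ s) :
    schattenNorm (2 * s) (B - Q * Qᵀ * B) ^ 2
      = schattenNorm s (Bᵀ * B - nystromApprox (Bᵀ * B) Om) := by
  obtain ⟨X, hX⟩ := aux_exists_factor Q (B * Om) (le_of_eq hrange.symm)
  obtain ⟨Y, hY⟩ := aux_exists_factor (B * Om) Q (le_of_eq hrange)
  have hQcancel : ∀ {p : ℕ} (Z : Matrix (Fin r) (Fin p) ℝ), Qᵀ * (Q * Z) = Z := by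
    intro p Z
    rw [← Matrix.mul_assoc, hQ, Matrix.one_mul]
  have hQR : Q * (Qᵀ * (B * Om)) = B * Om := by
    conv_lhs => rw [← hX]
    rw [hQcancel, hX]
  have hRY : (Qᵀ * (B * Om)) * Y = 1 := by rw [Matrix.mul_assoc, hY, hQ]
  -- the Gram matrix R Rᵀ is invertible
  have hGpd : ((Qᵀ * (B * Om)) * (Qᵀ * (B * Om))ᵀ).PosDef := by
    rw [Matrix.posDef_iff_dotProduct_mulVec]
    constructor
    · show _ᴴ = _
      rw [aux_conjT_eq_transpose, Matrix.transpose_mul, Matrix.transpose_transpose]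
    · intro x hx
      have hRx : (Qᵀ * (B * Om))ᵀ *ᵥ x ≠ 0 := by
        intro h0
        apply hx
        have h5 : ((Qᵀ * (B * Om)) * Y)ᵀ *ᵥ x = x := by
          rw [hRY, Matrix.transpose_one, Matrix.one_mulVec]
        rw [← h5, Matrix.transpose_mul, ← Matrix.mulVec_mulVec, h0, Matrix.mulVec_zero]
      have hcalc : dotProduct (star x)
            ((((Qᵀ * (B * Om)) * (Qᵀ * (B * Om))ᵀ)) *ᵥ x)
          = dotProduct (star ((Qᵀ * (B * Om))ᵀ *ᵥ x)) ((Qᵀ * (B * Om))ᵀ *ᵥ x) := by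
        rw [← Matrix.mulVec_mulVec, dotProduct_mulVec]
        congr 1
        rw [star_trivial, star_trivial]
        exact (Matrix.mulVec_transpose _ x).symm
      rw [hcalc]
      exact aux_dot_self_pos hRx
  have hGu : IsUnit ((Qᵀ * (B * Om)) * (Qᵀ * (B * Om))ᵀ) := hGpd.isUnit
  -- identify the pseudo-inverse
  have hMeq : Omᵀ * (Bᵀ * B) * Om = (Qᵀ * (B * Om))ᵀ * (Qᵀ * (B * Om)) := by
    calc Omᵀ * (Bᵀ * B) * Om = (B * Om)ᵀ * (B * Om) := by
          rw [Matrix.transpose_mul]; simp only [Matrix.mul_assoc]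
      _ = (B * Om)ᵀ * (Q * (Qᵀ * (B * Om))) := by rw [hQR]
      _ = (Qᵀ * (B * Om))ᵀ * (Qᵀ * (B * Om)) := by
          conv_rhs => rw [Matrix.transpose_mul, Matrix.transpose_transpose,
            Matrix.mul_assoc]
  have hpinv : pinv (Omᵀ * (Bᵀ * B) * Om)
      = (Qᵀ * (B * Om))ᵀ
        * (((Qᵀ * (B * Om)) * (Qᵀ * (B * Om))ᵀ)
            * ((Qᵀ * (B * Om)) * (Qᵀ * (B * Om))ᵀ))⁻¹
        * (Qᵀ * (B * Om)) := by
    rw [hMeq]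
    exact aux_pinv_eq _ hGu
  have happrox : nystromApprox (Bᵀ * B) Om = Bᵀ * (Q * Qᵀ) * B := by
    unfold nystromApprox
    rw [hpinv]
    have e3 : Bᵀ * B * Om
          * ((Qᵀ * (B * Om))ᵀ
            * (((Qᵀ * (B * Om)) * (Qᵀ * (B * Om))ᵀ)
                * ((Qᵀ * (B * Om)) * (Qᵀ * (B * Om))ᵀ))⁻¹
            * (Qᵀ * (B * Om))) * Omᵀ * (Bᵀ * B)
        = Bᵀ * ((B * Om)
          * ((Qᵀ * (B * Om))ᵀ
            * (((Qᵀ * (B * Om)) * (Qᵀ * (B * Om))ᵀ)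
                * ((Qᵀ * (B * Om)) * (Qᵀ * (B * Om))ᵀ))⁻¹
            * (Qᵀ * (B * Om))) * (B * Om)ᵀ) * B := by
      simp only [Matrix.transpose_mul, Matrix.transpose_transpose, Matrix.mul_assoc]
    rw [e3, aux_proj' Q (B * Om) hQ hQR hGu]
  have hE : (B - Q * Qᵀ * B)ᵀ * (B - Q * Qᵀ * B) = Bᵀ * B - Bᵀ * (Q * Qᵀ) * B := by
    have h4 : (Q * Qᵀ * B)ᵀ * (Q * Qᵀ * B) = (Q * Qᵀ * B)ᵀ * B := by
      simp only [Matrix.transpose_mul, Matrix.transpose_transpose, Matrix.mul_assoc]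
      rw [hQcancel]
    rw [Matrix.transpose_sub, Matrix.sub_mul, Matrix.mul_sub, Matrix.mul_sub, h4,
      sub_self, sub_zero]
    congr 1
    simp only [Matrix.transpose_mul, Matrix.transpose_transpose, Matrix.mul_assoc]
  rw [aux_schatten (B - Q * Qᵀ * B) hs]
  congr 1
  rw [hE, happrox]
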